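/- Let 𝔨 := {(0⊕A₁, 0⊕A₂) : A₁ ∈ so(p), A₂ ∈ so(q)} ⊆ 𝔥 and let 𝔭 := {M ∈ 𝔤 : the (2,1)-, (3,1)- and (3,2)-blocks of M vanish}. Then α is an injective linear map satisfying: (C.1) α(𝔨) ⊆ 𝔭; (C.2) α([Z,X]) = [α(Z),α(X)] for all Z ∈ 𝔨 and X ∈ 𝔥; and (C.3) 𝔤 = α(𝔥) + 𝔭 and {X ∈ 𝔥 : α(X) ∈ 𝔭} = 𝔨, so that α induces a linear isomorphism 𝔥/𝔨 ≅ 𝔤/𝔭. (α is an invariant Cartan connection of conformal type on the homogeneous space S^p × S^q = (O(p+1)×O(q+1))/(O(p)×O(q)).) -/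

import Mathlib

open Matrix

noncomputable section

/-- The sign `sgn(s')` of a (nonzero) real number. -/
def sgn (s' : ℝ) : ℝ := if 0 < s' then 1 else -1

/-- Index type of `ℝⁿ`, `n = p + q`. -/
abbrev NIdx (p q : ℕ) := Fin p ⊕ Fin q

/-- Index type for block matrices of block sizes `1, n, 1` with `n = p + q`. -/
abbrev BigIdx (p q : ℕ) := (Fin 1 ⊕ (Fin p ⊕ Fin q)) ⊕ Fin 1

/-- Elements of `𝔥 = so(p+1) × so(q+1)`, written as pairs of `(1+p)`- and
`(1+q)`-indexed matrices. -/
abbrev HElt (p q : ℕ) :=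
  Matrix (Fin 1 ⊕ Fin p) (Fin 1 ⊕ Fin p) ℝ × Matrix (Fin 1 ⊕ Fin q) (Fin 1 ⊕ Fin q) ℝ

/-- Membership in `𝔥 = so(p+1) × so(q+1)`: both components are skew-symmetric. -/
def skewPair (p q : ℕ) (X : HElt p q) : Prop := X.1ᵀ = -X.1 ∧ X.2ᵀ = -X.2

/-- The componentwise commutator bracket of `𝔥 = so(p+1) × so(q+1)`. -/
def hBracket (p q : ℕ) (X Y : HElt p q) : HElt p q :=
  (X.1 * Y.1 - Y.1 * X.1, X.2 * Y.2 - Y.2 * X.2)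

/-- `𝐠 = diag(I_p, ε I_q)`, `ε = sgn s'`. -/
def gMat (p q : ℕ) (s' : ℝ) : Matrix (NIdx p q) (NIdx p q) ℝ :=
  fromBlocks 1 0 0 (sgn s' • 1)

/-- `J = [[0,0,1],[0,𝐠,0],[1,0,0]]` (block sizes `1, n, 1`), so that
`𝔤 = so(J) = {M : MᵗJ + JM = 0}`. -/
def JMat (p q : ℕ) (s' : ℝ) : Matrix (BigIdx p q) (BigIdx p q) ℝ :=
  fromBlocks
    (fromBlocks 0 0 0 (gMat p q s'))
    (Matrix.of fun i _ => Sum.elim (fun _ => (1 : ℝ)) (fun _ => 0) i)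
    (Matrix.of fun _ j => Sum.elim (fun _ => (1 : ℝ)) (fun _ => 0) j)
    0

/-- The rho-tensor
`𝔸 = −(1/(2δ))((2sΔ+m)·diag(I_p,0) + (2s'Δ−m)·ε·diag(0,I_q))`, where
`δ = (n−1)(n−2)`, `Δ = (p−1)(q−1)`, `m = s·p(p−1) − s'·q(q−1)`, `ε = sgn s'`. -/
def AMat (p q : ℕ) (s s' : ℝ) : Matrix (NIdx p q) (NIdx p q) ℝ :=
  (-(1 / (2 * (((p : ℝ) + (q : ℝ) - 1) * ((p : ℝ) + (q : ℝ) - 2))))) •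
    ((2 * s * (((p : ℝ) - 1) * ((q : ℝ) - 1)) +
        (s * p * ((p : ℝ) - 1) - s' * q * ((q : ℝ) - 1))) •
      (fromBlocks 1 0 0 0 : Matrix (NIdx p q) (NIdx p q) ℝ) +
     ((2 * s' * (((p : ℝ) - 1) * ((q : ℝ) - 1)) -
        (s * p * ((p : ℝ) - 1) - s' * q * ((q : ℝ) - 1))) * sgn s') •
      (fromBlocks 0 0 0 1 : Matrix (NIdx p q) (NIdx p q) ℝ))

/-- The `ℝᵐ`-component `v` of an element `[[0,−vᵗ],[v,A]]` of `so(m+1)`. -/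
def vPart {m : ℕ} (P : Matrix (Fin 1 ⊕ Fin m) (Fin 1 ⊕ Fin m) ℝ) : Fin m → ℝ :=
  fun i => P (Sum.inr i) (Sum.inl 0)

/-- `x := (v/√s, w/√|s'|) ∈ ℝⁿ` for `X = (v ⊕ A₁, w ⊕ A₂) ∈ 𝔥`. -/
def xVec (p q : ℕ) (s s' : ℝ) (X : HElt p q) : NIdx p q → ℝ :=
  Sum.elim (fun i => vPart X.1 i / Real.sqrt s) (fun j => vPart X.2 j / Real.sqrt |s'|)

/-- The invariant Cartan connection `α : 𝔥 → 𝔤`: for `X = (v ⊕ A₁, w ⊕ A₂)` and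
`x = (v/√s, w/√|s'|)`, `α(X)` is the block matrix (block sizes `1, n, 1`) with
`(1,2)`-block `xᵗ𝔸`, `(2,1)`-block `x`, `(2,2)`-block `diag(A₁,A₂)`,
`(2,3)`-block `−𝐠𝔸x`, `(3,2)`-block `−xᵗ𝐠`, and all other blocks zero. -/
def alphaMap (p q : ℕ) (s s' : ℝ) (X : HElt p q) :
    Matrix (BigIdx p q) (BigIdx p q) ℝ :=
  fromBlocks
    (fromBlocks 0
      (Matrix.of fun _ j => Matrix.vecMul (xVec p q s s' X) (AMat p q s s') j)
      (Matrix.of fun i _ => xVec p q s s' X i)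
      (fromBlocks (toBlocks₂₂ X.1) 0 0 (toBlocks₂₂ X.2)))
    (Matrix.of fun i _ => Sum.elim (fun _ => (0 : ℝ))
      (fun k => -(Matrix.mulVec (gMat p q s' * AMat p q s s') (xVec p q s s' X) k)) i)
    (Matrix.of fun _ j => Sum.elim (fun _ => (0 : ℝ))
      (fun k => -(Matrix.vecMul (xVec p q s s' X) (gMat p q s') k)) j)
    0

/-- The curvature `κ(X,Y) = [α(X),α(Y)] − α([X,Y])` of the Cartan connection `α`. -/
def kappaMap (p q : ℕ) (s s' : ℝ) (X Y : HElt p q) :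
    Matrix (BigIdx p q) (BigIdx p q) ℝ :=
  alphaMap p q s s' X * alphaMap p q s s' Y - alphaMap p q s s' Y * alphaMap p q s s' X -
    alphaMap p q s s' (hBracket p q X Y)

/-- `𝔨 = {(0 ⊕ A₁, 0 ⊕ A₂) : A₁ ∈ so(p), A₂ ∈ so(q)} ⊆ 𝔥`. -/
def kSet (p q : ℕ) : Set (HElt p q) :=
  {Z | ∃ (A₁ : Matrix (Fin p) (Fin p) ℝ) (A₂ : Matrix (Fin q) (Fin q) ℝ),
    A₁ᵀ = -A₁ ∧ A₂ᵀ = -A₂ ∧ Z = (fromBlocks 0 0 0 A₁, fromBlocks 0 0 0 A₂)}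

/-- `𝔭 = {M ∈ 𝔤 : the (2,1)-, (3,1)- and (3,2)-blocks of M vanish}`. -/
def pSet (p q : ℕ) (s' : ℝ) : Set (Matrix (BigIdx p q) (BigIdx p q) ℝ) :=
  {M | Mᵀ * JMat p q s' + JMat p q s' * M = 0 ∧
    (∀ (j : NIdx p q) (a : Fin 1), M (Sum.inl (Sum.inr j)) (Sum.inl (Sum.inl a)) = 0) ∧
    (∀ (b : Fin 1) (a : Fin 1), M (Sum.inr b) (Sum.inl (Sum.inl a)) = 0) ∧
    (∀ (b : Fin 1) (j : NIdx p q), M (Sum.inr b) (Sum.inl (Sum.inr j)) = 0)}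

open Matrix

namespace CartanAux

def dg (p q : ℕ) (s' : ℝ) : NIdx p q → ℝ := Sum.elim (fun _ => 1) (fun _ => sgn s')

def cP (p q : ℕ) (s s' : ℝ) : ℝ :=
  (-(1 / (2 * (((p : ℝ) + (q : ℝ) - 1) * ((p : ℝ) + (q : ℝ) - 2))))) *
    (2 * s * (((p : ℝ) - 1) * ((q : ℝ) - 1)) +
        (s * p * ((p : ℝ) - 1) - s' * q * ((q : ℝ) - 1)))
def cQ (p q : ℕ) (s s' : ℝ) : ℝ :=
  (-(1 / (2 * (((p : ℝ) + (q : ℝ) - 1) * ((p : ℝ) + (q : ℝ) - 2))))) *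
    ((2 * s' * (((p : ℝ) - 1) * ((q : ℝ) - 1)) -
        (s * p * ((p : ℝ) - 1) - s' * q * ((q : ℝ) - 1))) * sgn s')

def dA (p q : ℕ) (s s' : ℝ) : NIdx p q → ℝ :=
  Sum.elim (fun _ => cP p q s s') (fun _ => cQ p q s s')

lemma sgn_mul_self (s' : ℝ) : sgn s' * sgn s' = 1 := by
  unfold sgn; split_ifs <;> norm_num

lemma dg_mul_self (p q : ℕ) (s' : ℝ) (k : NIdx p q) : dg p q s' k * dg p q s' k = 1 := by
  cases k <;> simp [dg, sgn_mul_self]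

lemma gMat_diag (p q : ℕ) (s' : ℝ) : gMat p q s' = diagonal (dg p q s') := by
  rw [gMat, smul_one_eq_diagonal, ← Matrix.diagonal_one, fromBlocks_diagonal]; rfl

lemma AMat_diag (p q : ℕ) (s s' : ℝ) : AMat p q s s' = diagonal (dA p q s s') := by
  ext (i|j) (i'|j') <;>
    simp [AMat, fromBlocks, Matrix.diagonal, dA, cP, cQ, Matrix.one_apply, mul_ite]

variable (p q : ℕ) (s s' : ℝ) (X : HElt p q)

/-- the (2,2)-block of `α X` -/
def dX : Matrix (NIdx p q) (NIdx p q) ℝ :=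
  fromBlocks (toBlocks₂₂ X.1) 0 0 (toBlocks₂₂ X.2)

@[simp] lemma alpha_11 (a b : Fin 1) :
    alphaMap p q s s' X (.inl (.inl a)) (.inl (.inl b)) = 0 := rfl

@[simp] lemma alpha_1n (a : Fin 1) (k : NIdx p q) :
    alphaMap p q s s' X (.inl (.inl a)) (.inl (.inr k)) =
      xVec p q s s' X k * dA p q s s' k := by
  simp [alphaMap, fromBlocks, AMat_diag, vecMul_diagonal]

@[simp] lemma alpha_n1 (k : NIdx p q) (a : Fin 1) :
    alphaMap p q s s' X (.inl (.inr k)) (.inl (.inl a)) = xVec p q s s' X k := rfl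

@[simp] lemma alpha_nn (k k' : NIdx p q) :
    alphaMap p q s s' X (.inl (.inr k)) (.inl (.inr k')) = dX p q X k k' := rfl

@[simp] lemma alpha_13 (a b : Fin 1) :
    alphaMap p q s s' X (.inl (.inl a)) (.inr b) = 0 := rfl

@[simp] lemma alpha_n3 (k : NIdx p q) (b : Fin 1) :
    alphaMap p q s s' X (.inl (.inr k)) (.inr b) =
      -(dg p q s' k * dA p q s s' k * xVec p q s s' X k) := by
  simp [alphaMap, fromBlocks, AMat_diag, gMat_diag, diagonal_mul_diagonal, mulVec_diagonal]

@[simp] lemma alpha_31 (b : Fin 1) (a : Fin 1) :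
    alphaMap p q s s' X (.inr b) (.inl (.inl a)) = 0 := rfl

@[simp] lemma alpha_3n (b : Fin 1) (k : NIdx p q) :
    alphaMap p q s s' X (.inr b) (.inl (.inr k)) =
      -(xVec p q s s' X k * dg p q s' k) := by
  simp [alphaMap, fromBlocks, gMat_diag, vecMul_diagonal]

@[simp] lemma alpha_33 (b b' : Fin 1) :
    alphaMap p q s s' X (.inr b) (.inr b') = 0 := rfl

@[simp] lemma J_11 (a b : Fin 1) :
    JMat p q s' (.inl (.inl a)) (.inl (.inl b)) = 0 := rfl
@[simp] lemma J_1n (a : Fin 1) (k : NIdx p q) :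
    JMat p q s' (.inl (.inl a)) (.inl (.inr k)) = 0 := rfl
@[simp] lemma J_n1 (k : NIdx p q) (a : Fin 1) :
    JMat p q s' (.inl (.inr k)) (.inl (.inl a)) = 0 := rfl
@[simp] lemma J_nn (k k' : NIdx p q) :
    JMat p q s' (.inl (.inr k)) (.inl (.inr k')) = diagonal (dg p q s') k k' := by
  simp [JMat, fromBlocks, gMat_diag]
@[simp] lemma J_13 (a b : Fin 1) :
    JMat p q s' (.inl (.inl a)) (.inr b) = 1 := rfl
@[simp] lemma J_n3 (k : NIdx p q) (b : Fin 1) :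
    JMat p q s' (.inl (.inr k)) (.inr b) = 0 := rfl
@[simp] lemma J_31 (b : Fin 1) (a : Fin 1) :
    JMat p q s' (.inr b) (.inl (.inl a)) = 1 := rfl
@[simp] lemma J_3n (b : Fin 1) (k : NIdx p q) :
    JMat p q s' (.inr b) (.inl (.inr k)) = 0 := rfl
@[simp] lemma J_33 (b b' : Fin 1) :
    JMat p q s' (.inr b) (.inr b') = 0 := rfl

end CartanAux
namespace CartanAux
open Matrix
variable (p q : ℕ) (s s' : ℝ)

lemma xVec_add (X Y : HElt p q) :
    xVec p q s s' (X + Y) = xVec p q s s' X + xVec p q s s' Y := by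
  funext k; cases k <;> simp [xVec, vPart, add_div]

lemma xVec_smul (c : ℝ) (X : HElt p q) :
    xVec p q s s' (c • X) = c • xVec p q s s' X := by
  funext k; cases k <;> simp [xVec, vPart, mul_div_assoc]

lemma dX_add (X Y : HElt p q) : dX p q (X + Y) = dX p q X + dX p q Y := by
  ext (i|j) (i'|j') <;> simp [dX, fromBlocks, toBlocks₂₂]

lemma dX_smul (c : ℝ) (X : HElt p q) : dX p q (c • X) = c • dX p q X := by
  ext (i|j) (i'|j') <;> simp [dX, fromBlocks, toBlocks₂₂]

/-- entries of the big `so(J)` condition -/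
lemma soJ_apply (M : Matrix (BigIdx p q) (BigIdx p q) ℝ) (i j : BigIdx p q) :
    (Mᵀ * JMat p q s' + JMat p q s' * M) i j =
      ((∑ k : Fin 1, M (.inl (.inl k)) i * JMat p q s' (.inl (.inl k)) j) +
        ∑ k : NIdx p q, M (.inl (.inr k)) i * JMat p q s' (.inl (.inr k)) j) +
       (∑ k : Fin 1, M (.inr k) i * JMat p q s' (.inr k) j) +
      (((∑ k : Fin 1, JMat p q s' i (.inl (.inl k)) * M (.inl (.inl k)) j) +
        ∑ k : NIdx p q, JMat p q s' i (.inl (.inr k)) * M (.inl (.inr k)) j) +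
       ∑ k : Fin 1, JMat p q s' i (.inr k) * M (.inr k) j) := by
  simp [Matrix.mul_apply, Fintype.sum_sum_type, Matrix.transpose_apply]

/-- skewness of the (2,2)-block of `α X` -/
lemma dX_skew (X : HElt p q) (hX : skewPair p q X) (k k' : NIdx p q) :
    dX p q X k' k = - dX p q X k k' := by
  obtain ⟨h1, h2⟩ := hX
  rcases k with i | j <;> rcases k' with i' | j'
  · have := congrFun (congrFun h1 (Sum.inr i)) (Sum.inr i')
    simpa [dX, fromBlocks, toBlocks₂₂, Matrix.transpose_apply] using this
  · simp [dX, fromBlocks]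
  · simp [dX, fromBlocks]
  · have := congrFun (congrFun h2 (Sum.inr j)) (Sum.inr j')
    simpa [dX, fromBlocks, toBlocks₂₂, Matrix.transpose_apply] using this

lemma alpha_mem_soJ (X : HElt p q) (hX : skewPair p q X) :
    (alphaMap p q s s' X)ᵀ * JMat p q s' + JMat p q s' * alphaMap p q s s' X = 0 := by
  ext i j
  rw [soJ_apply]
  rcases i with (a | k) | b <;> rcases j with (a' | k') | b' <;>
    simp [Matrix.diagonal, Finset.mul_sum, Finset.sum_mul, mul_ite, ite_mul] <;>
    try ring_nf
  · rcases k with i | j <;> rcases k' with i' | j'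
    · rw [dX_skew p q X hX (Sum.inl i) (Sum.inl i')]; simp [dg]
    · simp [dX, fromBlocks]
    · simp [dX, fromBlocks]
    · rw [dX_skew p q X hX (Sum.inr j) (Sum.inr j')]; simp [dg]; ring
  · rw [sq, dg_mul_self]; ring
  · rw [sq, dg_mul_self]; ring
end CartanAux
namespace CartanAux
open Matrix
variable (p q : ℕ) (s s' : ℝ)

section kElt
variable (A₁ : Matrix (Fin p) (Fin p) ℝ) (A₂ : Matrix (Fin q) (Fin q) ℝ)

/-- the `n × n` block-diagonal matrix of an element of `𝔨` -/
def dZ : Matrix (NIdx p q) (NIdx p q) ℝ := fromBlocks A₁ 0 0 A₂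

lemma kElt_skew (h1 : A₁ᵀ = -A₁) (h2 : A₂ᵀ = -A₂) :
    skewPair p q (fromBlocks 0 0 0 A₁, fromBlocks 0 0 0 A₂) := by
  constructor <;> simp [fromBlocks_transpose, h1, h2] <;>
    ext (a | i) (b | i') <;> simp [fromBlocks]

lemma xVec_kElt : xVec p q s s' (fromBlocks 0 0 0 A₁, fromBlocks 0 0 0 A₂) = 0 := by
  funext k; cases k <;> simp [xVec, vPart, fromBlocks]

lemma dX_kElt : dX p q (fromBlocks 0 0 0 A₁, fromBlocks 0 0 0 A₂) = dZ p q A₁ A₂ := by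
  ext (i | j) (i' | j') <;> simp [dX, dZ, toBlocks₂₂, fromBlocks]

lemma dZ_skew (h1 : A₁ᵀ = -A₁) (h2 : A₂ᵀ = -A₂) (k m : NIdx p q) :
    dZ p q A₁ A₂ k m = - dZ p q A₁ A₂ m k := by
  rcases k with i | j <;> rcases m with i' | j' <;> simp [dZ, fromBlocks]
  · simpa [Matrix.transpose_apply] using congrFun (congrFun h1 i') i
  · simpa [Matrix.transpose_apply] using congrFun (congrFun h2 j') j

lemma dA_dZ (m k : NIdx p q) :
    dA p q s s' m * dZ p q A₁ A₂ m k = dA p q s s' k * dZ p q A₁ A₂ m k := by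
  rcases m with i | j <;> rcases k with i' | j' <;> simp [dZ, dA, fromBlocks]

lemma dg_dZ (m k : NIdx p q) :
    dg p q s' m * dZ p q A₁ A₂ m k = dg p q s' k * dZ p q A₁ A₂ m k := by
  rcases m with i | j <;> rcases k with i' | j' <;> simp [dZ, dg, fromBlocks]

lemma xVec_bracket (X : HElt p q) (k : NIdx p q) :
    xVec p q s s' (hBracket p q (fromBlocks 0 0 0 A₁, fromBlocks 0 0 0 A₂) X) k =
      ∑ m : NIdx p q, dZ p q A₁ A₂ k m * xVec p q s s' X m := by
  rcases k with i | j <;>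
    simp [xVec, hBracket, vPart, Matrix.mul_apply, Fintype.sum_sum_type, fromBlocks,
      Fintype.sum_sum_type, dZ, Finset.sum_div, mul_div_assoc]

lemma dX_bracket (X : HElt p q) (k k' : NIdx p q) :
    dX p q (hBracket p q (fromBlocks 0 0 0 A₁, fromBlocks 0 0 0 A₂) X) k k' =
      (∑ m : NIdx p q, dZ p q A₁ A₂ k m * dX p q X m k') -
        ∑ m : NIdx p q, dX p q X k m * dZ p q A₁ A₂ m k' := by
  rcases k with i | j <;> rcases k' with i' | j' <;>
    simp [dX, hBracket, toBlocks₂₂, Matrix.mul_apply, Fintype.sum_sum_type, fromBlocks, dZ]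

lemma skew_entry {m : ℕ} {A : Matrix (Fin m) (Fin m) ℝ} (h : Aᵀ = -A) (i i' : Fin m) :
    A i i' = -A i' i := by
  simpa using congrFun (congrFun h i') i

lemma c2 (h1 : A₁ᵀ = -A₁) (h2 : A₂ᵀ = -A₂) (X : HElt p q) (hX : skewPair p q X) :
    alphaMap p q s s' (hBracket p q (fromBlocks 0 0 0 A₁, fromBlocks 0 0 0 A₂) X) =
      alphaMap p q s s' (fromBlocks 0 0 0 A₁, fromBlocks 0 0 0 A₂) * alphaMap p q s s' X -
        alphaMap p q s s' X * alphaMap p q s s' (fromBlocks 0 0 0 A₁, fromBlocks 0 0 0 A₂) := by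
  ext i j
  rcases i with (a | k) | b <;> rcases j with (a' | k') | b' <;>
    simp [Matrix.sub_apply, Matrix.mul_apply, Fintype.sum_sum_type,
      xVec_kElt, dX_kElt, xVec_bracket, dX_bracket]
  · rcases k' with i' | j' <;>
      simp [dZ, dA, dg, fromBlocks, Finset.sum_mul, ← Finset.sum_neg_distrib] <;>
      refine Finset.sum_congr rfl fun a _ => ?_
    · rw [skew_entry h1 i' a]; ring
    · rw [skew_entry h2 j' a]; ring
  · rcases k with i | j <;>
      simp [dZ, dA, dg, fromBlocks, Finset.mul_sum, ← Finset.sum_neg_distrib] <;>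
      refine Finset.sum_congr rfl fun a _ => ?_ <;> ring
  · rcases k' with i' | j' <;>
      simp [dZ, dA, dg, fromBlocks, Finset.sum_mul, ← Finset.sum_neg_distrib] <;>
      refine Finset.sum_congr rfl fun a _ => ?_
    · rw [skew_entry h1 i' a]; ring
    · rw [skew_entry h2 j' a]; ring

end kElt
end CartanAux
namespace CartanAux
open Matrix
variable (p q : ℕ) (s s' : ℝ)

lemma self_zero {ι : Type*} {A : Matrix ι ι ℝ} (h : Aᵀ = -A) (i : ι) : A i i = 0 := by
  have := congrFun (congrFun h i) i
  simp only [Matrix.transpose_apply, Matrix.neg_apply] at this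
  linarith

lemma skew_entry' {ι : Type*} {A : Matrix ι ι ℝ} (h : Aᵀ = -A) (i i' : ι) :
    A i i' = -A i' i := by
  simpa using congrFun (congrFun h i') i

section sqrt

lemma sqrt_s_ne (hs : 0 < s) : Real.sqrt s ≠ 0 := by
  positivity

lemma sqrt_s'_ne (hs' : s' ≠ 0) : Real.sqrt |s'| ≠ 0 := by
  have : 0 < |s'| := abs_pos.mpr hs'
  positivity

/-- recover `vPart` from `xVec` -/
lemma vPart_eq_xVec (hs : 0 < s) (X : HElt p q) (i : Fin p) :
    vPart X.1 i = xVec p q s s' X (Sum.inl i) * Real.sqrt s := by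
  have := sqrt_s_ne s hs
  rw [xVec, Sum.elim_inl]; field_simp

lemma wPart_eq_xVec (hs' : s' ≠ 0) (X : HElt p q) (j : Fin q) :
    vPart X.2 j = xVec p q s s' X (Sum.inr j) * Real.sqrt |s'| := by
  have := sqrt_s'_ne s' hs'
  rw [xVec, Sum.elim_inr]; field_simp

/-- reconstruction of a skew matrix from `vPart` and `toBlocks₂₂` -/
lemma skew_recon {m : ℕ} (P : Matrix (Fin 1 ⊕ Fin m) (Fin 1 ⊕ Fin m) ℝ)
    (h : Pᵀ = -P) :
    P = fromBlocks 0 (Matrix.of fun _ i => -vPart P i) (Matrix.of fun i _ => vPart P i)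
      (toBlocks₂₂ P) := by
  ext (a | i) (b | i')
  · rw [Subsingleton.elim a b]; simpa [fromBlocks] using self_zero h (Sum.inl b)
  · have := skew_entry' h (Sum.inl a) (Sum.inr i')
    simpa [fromBlocks, vPart, Subsingleton.elim a 0] using this
  · simp [fromBlocks, vPart, Subsingleton.elim b 0]
  · simp [fromBlocks, toBlocks₂₂]

lemma alpha_inj (hs : 0 < s) (hs' : s' ≠ 0) (X Y : HElt p q) (hX : skewPair p q X) (hY : skewPair p q Y)
    (h : alphaMap p q s s' X = alphaMap p q s s' Y) : X = Y := by
  have hx : xVec p q s s' X = xVec p q s s' Y := by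
    funext k
    simpa using congrFun (congrFun h (Sum.inl (Sum.inr k))) (Sum.inl (Sum.inl 0))
  have hd : dX p q X = dX p q Y := by
    ext k k'
    simpa using congrFun (congrFun h (Sum.inl (Sum.inr k))) (Sum.inl (Sum.inr k'))
  have hv : vPart X.1 = vPart Y.1 := by
    funext i; rw [vPart_eq_xVec p q s s' hs X, vPart_eq_xVec p q s s' hs Y, hx]
  have hw : vPart X.2 = vPart Y.2 := by
    funext j
    rw [wPart_eq_xVec p q s s' hs' X, wPart_eq_xVec p q s s' hs' Y, hx]
  have ht1 : toBlocks₂₂ X.1 = toBlocks₂₂ Y.1 := by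
    ext i i'
    simpa [dX, fromBlocks] using congrFun (congrFun hd (Sum.inl i)) (Sum.inl i')
  have ht2 : toBlocks₂₂ X.2 = toBlocks₂₂ Y.2 := by
    ext j j'
    simpa [dX, fromBlocks] using congrFun (congrFun hd (Sum.inr j)) (Sum.inr j')
  have e1 : X.1 = Y.1 := by
    rw [skew_recon X.1 hX.1, skew_recon Y.1 hY.1, hv, ht1]
  have e2 : X.2 = Y.2 := by
    rw [skew_recon X.2 hX.2, skew_recon Y.2 hY.2, hw, ht2]
  exact Prod.ext e1 e2

end sqrt

lemma alpha_add (X Y : HElt p q) :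
    alphaMap p q s s' (X + Y) = alphaMap p q s s' X + alphaMap p q s s' Y := by
  ext i j
  rcases i with (a | k) | b <;> rcases j with (a' | k') | b' <;>
    simp [Matrix.add_apply, xVec_add, dX_add, add_mul, mul_add] <;> ring

lemma alpha_smul (c : ℝ) (X : HElt p q) :
    alphaMap p q s s' (c • X) = c • alphaMap p q s s' X := by
  ext i j
  rcases i with (a | k) | b <;> rcases j with (a' | k') | b' <;>
    simp [Matrix.smul_apply, xVec_smul, dX_smul, smul_eq_mul] <;> ring

end CartanAux
namespace CartanAux
open Matrix
variable (p q : ℕ) (s s' : ℝ)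

lemma c1 (A₁ : Matrix (Fin p) (Fin p) ℝ) (A₂ : Matrix (Fin q) (Fin q) ℝ)
    (h1 : A₁ᵀ = -A₁) (h2 : A₂ᵀ = -A₂) :
    alphaMap p q s s' (fromBlocks 0 0 0 A₁, fromBlocks 0 0 0 A₂) ∈ pSet p q s' := by
  refine ⟨alpha_mem_soJ p q s s' _ (kElt_skew p q A₁ A₂ h1 h2), ?_, ?_, ?_⟩
  · intro k a; simp [xVec_kElt]
  · intro b a; simp
  · intro b k; simp [xVec_kElt]

lemma c3b (hs : 0 < s) (hs' : s' ≠ 0) (X : HElt p q) (hX : skewPair p q X) :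
    alphaMap p q s s' X ∈ pSet p q s' ↔ X ∈ kSet p q := by
  constructor
  · rintro ⟨-, h21, -, -⟩
    have hx : ∀ k, xVec p q s s' X k = 0 := fun k => by simpa using h21 k 0
    have hv : ∀ i, vPart X.1 i = 0 := fun i => by
      rw [vPart_eq_xVec p q s s' hs X i, hx]; ring
    have hw : ∀ j, vPart X.2 j = 0 := fun j => by
      rw [wPart_eq_xVec p q s s' hs' X j, hx]; ring
    refine ⟨toBlocks₂₂ X.1, toBlocks₂₂ X.2, ?_, ?_, Prod.ext ?_ ?_⟩
    · ext i i'
      simpa [toBlocks₂₂] using skew_entry' hX.1 (Sum.inr i') (Sum.inr i)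
    · ext j j'
      simpa [toBlocks₂₂] using skew_entry' hX.2 (Sum.inr j') (Sum.inr j)
    · ext (a | i) (b | i')
      · rw [Subsingleton.elim a b]; simpa [fromBlocks] using self_zero hX.1 (Sum.inl b)
      · rw [Subsingleton.elim a 0, skew_entry' hX.1 (Sum.inl 0) (Sum.inr i')]
        have := hv i'; simp only [vPart] at this
        simp [fromBlocks, this]
      · rw [Subsingleton.elim b 0]
        have := hv i; simp only [vPart] at this
        simp [fromBlocks, this]
      · simp [fromBlocks, toBlocks₂₂]
    · ext (a | j) (b | j')
      · rw [Subsingleton.elim a b]; simpa [fromBlocks] using self_zero hX.2 (Sum.inl b)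
      · rw [Subsingleton.elim a 0, skew_entry' hX.2 (Sum.inl 0) (Sum.inr j')]
        have := hw j'; simp only [vPart] at this
        simp [fromBlocks, this]
      · rw [Subsingleton.elim b 0]
        have := hw j; simp only [vPart] at this
        simp [fromBlocks, this]
      · simp [fromBlocks, toBlocks₂₂]
  · rintro ⟨A₁, A₂, h1, h2, rfl⟩
    exact c1 p q s s' A₁ A₂ h1 h2

lemma c3a (hs : 0 < s) (hs' : s' ≠ 0) (M : Matrix (BigIdx p q) (BigIdx p q) ℝ)
    (h : Mᵀ * JMat p q s' + JMat p q s' * M = 0) :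
    ∃ X : HElt p q, skewPair p q X ∧
      ∃ P ∈ pSet p q s', M = alphaMap p q s s' X + P := by
  set v : Fin p → ℝ := fun i => Real.sqrt s * M (.inl (.inr (.inl i))) (.inl (.inl 0)) with hv
  set w : Fin q → ℝ := fun j => Real.sqrt |s'| * M (.inl (.inr (.inr j))) (.inl (.inl 0)) with hw
  set X : HElt p q :=
    (fromBlocks 0 (Matrix.of fun _ i => -v i) (Matrix.of fun i _ => v i) 0,
     fromBlocks 0 (Matrix.of fun _ j => -w j) (Matrix.of fun j _ => w j) 0) with hXdef
  have hXs : skewPair p q X := by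
    constructor <;> ext (a | i) (b | i') <;>
      simp [hXdef, fromBlocks, Matrix.transpose_apply]
  have hxv : ∀ k, xVec p q s s' X k = M (.inl (.inr k)) (.inl (.inl 0)) := by
    intro k
    rcases k with i | j
    · show vPart X.1 i / Real.sqrt s = _
      have : vPart X.1 i = v i := rfl
      rw [this]
      show Real.sqrt s * _ / Real.sqrt s = _
      rw [mul_comm, mul_div_assoc, div_self (sqrt_s_ne s hs), mul_one]
    · show vPart X.2 j / Real.sqrt |s'| = _
      have : vPart X.2 j = w j := rfl
      rw [this]
      show Real.sqrt |s'| * _ / Real.sqrt |s'| = _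
      rw [mul_comm, mul_div_assoc, div_self (sqrt_s'_ne s' hs'), mul_one]
  have key : ∀ i j, (Mᵀ * JMat p q s' + JMat p q s' * M) i j = 0 := fun i j => by
    rw [h]; simp
  have h31 : M (.inr 0) (.inl (.inl 0)) = 0 := by
    have := key (.inl (.inl 0)) (.inl (.inl 0))
    rw [soJ_apply] at this
    simp at this
    linarith
  have h32 : ∀ k, M (.inr 0) (.inl (.inr k)) =
      -(M (.inl (.inr k)) (.inl (.inl 0)) * dg p q s' k) := by
    intro k
    have := key (.inl (.inl 0)) (.inl (.inr k))
    rw [soJ_apply] at this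
    simp [Matrix.diagonal, mul_ite, ite_mul] at this
    linarith
  refine ⟨X, hXs, M - alphaMap p q s s' X, ⟨?_, ?_, ?_, ?_⟩, by abel⟩
  · have hα := alpha_mem_soJ p q s s' X hXs
    rw [Matrix.transpose_sub, Matrix.sub_mul, Matrix.mul_sub, sub_add_sub_comm, h, hα,
      sub_zero]
  · intro k a
    rw [Subsingleton.elim a 0]
    simp [Matrix.sub_apply, hxv k]
  · intro b a
    rw [Subsingleton.elim a 0, Subsingleton.elim b 0]
    simp [Matrix.sub_apply, h31]
  · intro b k
    rw [Subsingleton.elim b 0]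
    simp [Matrix.sub_apply, h32 k, hxv k]

end CartanAux

/-- **`α` is an invariant Cartan connection of conformal type on the homogeneous space
`Sᵖ × S^q = (O(p+1)×O(q+1))/(O(p)×O(q))`:** `α` is an injective linear map satisfying
(C.1) `α(𝔨) ⊆ 𝔭`; (C.2) `α([Z,X]) = [α(Z), α(X)]` for all `Z ∈ 𝔨`, `X ∈ 𝔥`; and
(C.3) `𝔤 = α(𝔥) + 𝔭` together with `{X ∈ 𝔥 : α(X) ∈ 𝔭} = 𝔨`, so that `α` induces a
linear isomorphism `𝔥/𝔨 ≅ 𝔤/𝔭`. -/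
theorem alpha_is_invariant_cartan_connection (p q : ℕ) (hp : 1 ≤ p) (hq : 1 ≤ q)
    (hn : 3 ≤ p + q) (s s' : ℝ) (hs : 0 < s) (hs' : s' ≠ 0) :
    -- α is injective on 𝔥
    (∀ X Y : HElt p q, skewPair p q X → skewPair p q Y →
      alphaMap p q s s' X = alphaMap p q s s' Y → X = Y) ∧
    -- α is linear
    (∀ X Y : HElt p q, skewPair p q X → skewPair p q Y →
      alphaMap p q s s' (X + Y) = alphaMap p q s s' X + alphaMap p q s s' Y) ∧
    (∀ (c : ℝ) (X : HElt p q), skewPair p q X →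
      alphaMap p q s s' (c • X) = c • alphaMap p q s s' X) ∧
    -- (C.1) α(𝔨) ⊆ 𝔭
    (∀ Z ∈ kSet p q, alphaMap p q s s' Z ∈ pSet p q s') ∧
    -- (C.2) α([Z,X]) = [α(Z), α(X)] for Z ∈ 𝔨, X ∈ 𝔥
    (∀ Z ∈ kSet p q, ∀ X : HElt p q, skewPair p q X →
      alphaMap p q s s' (hBracket p q Z X) =
        alphaMap p q s s' Z * alphaMap p q s s' X -
          alphaMap p q s s' X * alphaMap p q s s' Z) ∧
    -- (C.3) 𝔤 = α(𝔥) + 𝔭 and {X ∈ 𝔥 : α(X) ∈ 𝔭} = 𝔨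
    (∀ M : Matrix (BigIdx p q) (BigIdx p q) ℝ,
      Mᵀ * JMat p q s' + JMat p q s' * M = 0 →
      ∃ X : HElt p q, skewPair p q X ∧ ∃ P ∈ pSet p q s', M = alphaMap p q s s' X + P) ∧
    (∀ X : HElt p q, skewPair p q X →
      (alphaMap p q s s' X ∈ pSet p q s' ↔ X ∈ kSet p q)) := by
  refine ⟨?_, ?_, ?_, ?_, ?_, ?_, ?_⟩
  · exact fun X Y hX hY h => CartanAux.alpha_inj p q s s' hs hs' X Y hX hY h
  · exact fun X Y _ _ => CartanAux.alpha_add p q s s' X Y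
  · exact fun c X _ => CartanAux.alpha_smul p q s s' c X
  · rintro Z ⟨A₁, A₂, h1, h2, rfl⟩
    exact CartanAux.c1 p q s s' A₁ A₂ h1 h2
  · rintro Z ⟨A₁, A₂, h1, h2, rfl⟩ X hX
    exact CartanAux.c2 p q s s' A₁ A₂ h1 h2 X hX
  · exact fun M h => CartanAux.c3a p q s s' hs hs' M h
  · exact fun X hX => CartanAux.c3b p q s s' hs hs' X hX

end
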